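/- arXiv:2401.17687 — 2 statements merged into one kernel-verified Lean document; each statement's English description precedes it below -/
import Mathlib

section
/- Let E_q(t) = ∑_{n≥0} q^{binom(n,2)} t^n/[n]_q! and F(t) = ∑_{n≥1} f_n t^n/[n]_q!. Then E_q[F]*_q = ∑_{n≥0} γ*_n t^n/[n]_q! if and only if γ*_0 = 1 and γ*_{n+1} = ∑_{k=0}^n binom[n,k]_q q^{n-k} γ*_{n-k} f_{k+1} for all n ≥ 0. -/
/-- The q-integer `[n]_q = 1 + q + ... + q^{n-1}`. -/
noncomputable def qInt {K : Type*} [CommRing K] (q : K) (n : ℕ) : K :=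
  ∑ i ∈ Finset.range n, q ^ i

/-- The q-factorial `[n]_q!`. -/
noncomputable def qFact {K : Type*} [CommRing K] (q : K) (n : ℕ) : K :=
  ∏ i ∈ Finset.range n, qInt q (i + 1)

/-- The Gaussian binomial coefficient. -/
noncomputable def qBinom {K : Type*} [Field K] (q : K) (n k : ℕ) : K :=
  qFact q n / (qFact q k * qFact q (n - k))

/-- The q-derivative `D_q F(t) = (F(qt) - F(t))/((q-1)t)`. -/
noncomputable def qDeriv {K : Type*} [CommRing K] (q : K) (F : PowerSeries K) :
    PowerSeries K :=
  PowerSeries.mk fun n => qInt q (n + 1) * PowerSeries.coeff (R := K) (n + 1) F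

/-- Proposition 6.6: with `E_q(t) = ∑ q^{C(n,2)} tⁿ/[n]!`, `F = ∑_{n≥1} fₙ tⁿ/[n]!`,
`Fk` the starred q-powers of `F`, and `Cs = E_q[F]*_q` (coefficientwise):
`E_q[F]*_q = ∑ γ*ₙ tⁿ/[n]!` iff `γ*₀ = 1` and
`γ*_{n+1} = ∑_{k=0}^n [n,k]_q q^{n-k} γ*_{n-k} f_{k+1}`. -/
theorem stmt16 {K : Type*} [Field K] (q : K) (hq0 : q ≠ 0)
    (hq : ∀ m : ℕ, 1 ≤ m → qInt q m ≠ 0)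
    (f : ℕ → K) (hf0 : f 0 = 0)
    (F : PowerSeries K) (hFdef : F = PowerSeries.mk fun n => f n / qFact q n)
    (Fk : ℕ → PowerSeries K) (hFk0 : Fk 0 = 1)
    (hFkc : ∀ k, 0 < k → PowerSeries.constantCoeff (R := K) (Fk k) = 0)
    (hFkrec : ∀ k, 0 < k → qDeriv q (Fk k) =
      PowerSeries.C (R := K) (qInt q k * (q ^ (k - 1))⁻¹) *
        PowerSeries.rescale q (Fk (k - 1)) * qDeriv q F)
    (Cs : PowerSeries K)
    (hC : ∀ n, PowerSeries.coeff (R := K) n Cs =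
      ∑ k ∈ Finset.range (n + 1),
        q ^ Nat.choose k 2 / qFact q k * PowerSeries.coeff (R := K) n (Fk k))
    (γ : ℕ → K) :
    (∀ n, PowerSeries.coeff (R := K) n Cs = γ n / qFact q n) ↔
      (γ 0 = 1 ∧ ∀ n, γ (n + 1) =
        ∑ k ∈ Finset.range (n + 1),
          qBinom q n k * q ^ (n - k) * γ (n - k) * f (k + 1)) := by
  have hIntNe : ∀ n : ℕ, qInt q (n+1) ≠ 0 := fun n => hq (n+1) (by omega)
  have hFactNe : ∀ n : ℕ, qFact q n ≠ 0 := by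
    intro n
    exact Finset.prod_ne_zero_iff.mpr fun i _ => hq (i+1) (by omega)
  have hFactSucc : ∀ n : ℕ, qFact q (n+1) = qFact q n * qInt q (n+1) :=
    fun n => Finset.prod_range_succ _ _
  have hD : ∀ (φ : PowerSeries K) (n : ℕ), PowerSeries.coeff (R := K) n (qDeriv q φ) =
      qInt q (n+1) * PowerSeries.coeff (R := K) (n+1) φ := by
    intro φ n; simp [qDeriv]
  have hFc : ∀ m, PowerSeries.coeff (R := K) m F = f m / qFact q m := by
    intro m; rw [hFdef]; simp
  -- vanishing of low coefficients of Fk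
  have hvan : ∀ k m, m < k → PowerSeries.coeff (R := K) m (Fk k) = 0 := by
    intro k
    induction k with
    | zero => intro m hm; omega
    | succ k ih =>
      intro m hm
      match m with
      | 0 => simpa [PowerSeries.coeff_zero_eq_constantCoeff] using hFkc (k+1) (Nat.succ_pos k)
      | Nat.succ s =>
        have h1 : qInt q (s+1) * PowerSeries.coeff (R := K) (s+1) (Fk (k+1)) = 0 := by
          rw [← hD, hFkrec (k+1) (Nat.succ_pos k), mul_assoc,
            PowerSeries.coeff_C_mul, PowerSeries.coeff_mul,
            Finset.Nat.sum_antidiagonal_eq_sum_range_succ_mk]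
          have : ∀ i ∈ Finset.range (s+1),
              PowerSeries.coeff (R := K) i (PowerSeries.rescale q (Fk (k+1-1))) *
              PowerSeries.coeff (R := K) (s-i) (qDeriv q F) = 0 := by
            intro i hi
            simp only [Finset.mem_range] at hi
            simp only [Nat.add_sub_cancel]; rw [PowerSeries.coeff_rescale, ih i (by omega), mul_zero, zero_mul]
          rw [Finset.sum_eq_zero this, mul_zero]
        exact (mul_eq_zero.mp h1).resolve_left (hIntNe s)
  -- key recurrence for coefficients of Cs
  have key : ∀ n : ℕ, qInt q (n+1) * PowerSeries.coeff (R := K) (n+1) Cs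
      = ∑ i ∈ Finset.range (n+1),
          PowerSeries.coeff (R := K) i Cs * (q^i * (f (n-i+1) / qFact q (n-i))) := by
    intro n
    rw [hC (n+1), Finset.mul_sum, Finset.sum_range_succ']
    have hz : qInt q (n+1) * (q ^ Nat.choose 0 2 / qFact q 0 * PowerSeries.coeff (R := K) (n+1) (Fk 0)) = 0 := by
      simp [hFk0, PowerSeries.coeff_one]
    rw [hz, add_zero]
    have step : ∀ k ∈ Finset.range (n+1),
        qInt q (n+1) * (q ^ Nat.choose (k+1) 2 / qFact q (k+1) * PowerSeries.coeff (R := K) (n+1) (Fk (k+1)))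
        = ∑ i ∈ Finset.range (n+1),
            (q ^ Nat.choose k 2 / qFact q k * PowerSeries.coeff (R := K) i (Fk k)) *
              (q^i * (f (n-i+1) / qFact q (n-i))) := by
      intro k _
      have h2 : qInt q (n+1) * PowerSeries.coeff (R := K) (n+1) (Fk (k+1))
          = (qInt q (k+1) * (q^k)⁻¹) * ∑ i ∈ Finset.range (n+1),
              q^i * PowerSeries.coeff (R := K) i (Fk k) * (qInt q (n-i+1) * (f (n-i+1) / qFact q (n-i+1))) := by
        rw [← hD, hFkrec (k+1) (Nat.succ_pos k), mul_assoc, PowerSeries.coeff_C_mul,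
          PowerSeries.coeff_mul, Finset.Nat.sum_antidiagonal_eq_sum_range_succ_mk]
        simp only [Nat.add_sub_cancel, PowerSeries.coeff_rescale, hD, hFc]
      rw [mul_left_comm, h2, mul_left_comm, Finset.mul_sum, Finset.mul_sum]
      refine Finset.sum_congr rfl fun i _ => ?_
      have hch : q ^ Nat.choose (k+1) 2 = q ^ Nat.choose k 2 * q ^ k := by
        rw [← pow_add]; congr 1; simp [Nat.choose_succ_succ]; ring
      rw [hch, hFactSucc k, hFactSucc (n-i)]
      have e1 := hFactNe k
      have e2 := hFactNe (n-i)
      have e3 := hIntNe k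
      have e4 := hIntNe (n-i)
      have e5 : q ^ k ≠ 0 := pow_ne_zero _ hq0
      field_simp
    rw [Finset.sum_congr rfl step, Finset.sum_comm]
    refine Finset.sum_congr rfl fun i hi => ?_
    simp only [Finset.mem_range] at hi
    rw [← Finset.sum_mul]
    congr 1
    rw [hC i]
    refine (Finset.sum_subset (Finset.range_subset_range.mpr (by omega)) ?_).symm
    intro k _ hk
    simp only [Finset.mem_range, not_lt] at hk
    rw [hvan k i (by omega), mul_zero]
  have hc0 : PowerSeries.coeff (R := K) 0 Cs = 1 := by
    rw [hC 0]
    simp [hFk0, qFact]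
  have hq00 : qFact q 0 = 1 := by simp [qFact]
  have main : ∀ n : ℕ, (∀ i, i ≤ n → PowerSeries.coeff (R := K) i Cs = γ i / qFact q i) →
      PowerSeries.coeff (R := K) (n+1) Cs =
        (∑ k ∈ Finset.range (n+1), qBinom q n k * q ^ (n-k) * γ (n-k) * f (k+1)) /
          qFact q (n+1) := by
    intro n h
    have e : ∑ i ∈ Finset.range (n+1),
          PowerSeries.coeff (R := K) i Cs * (q^i * (f (n-i+1) / qFact q (n-i)))
        = (∑ k ∈ Finset.range (n+1), qBinom q n k * q ^ (n-k) * γ (n-k) * f (k+1)) /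
            qFact q n := by
      rw [Finset.sum_div, ← Finset.sum_range_reflect]
      refine Finset.sum_congr rfl fun j hj => ?_
      simp only [Finset.mem_range] at hj
      have hj' : j ≤ n := by omega
      have h1 : n + 1 - 1 - j = n - j := by omega
      have h2 : n - (n - j) = j := by omega
      rw [h1, h2, h (n-j) (by omega), qBinom]
      have e2 := hFactNe (n-j)
      have e3 := hFactNe j
      have e4 := hFactNe n
      field_simp
    have hk := key n
    rw [e, eq_div_iff (hFactNe n)] at hk
    rw [hFactSucc n, eq_div_iff (mul_ne_zero (hFactNe n) (hIntNe n))]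
    linear_combination hk
  constructor
  · intro h
    constructor
    · have := h 0
      rw [hc0, hq00, div_one] at this
      exact this.symm
    · intro n
      have hm := main n fun i _ => h i
      rw [h (n+1)] at hm
      have := congrArg (· * qFact q (n+1)) hm
      simpa [div_mul_cancel₀ _ (hFactNe (n+1))] using this
  · rintro ⟨h0, hrec⟩ n
    induction n using Nat.strong_induction_on with
    | _ n ih =>
      match n with
      | 0 => rw [hc0, h0, hq00, div_one]
      | Nat.succ m =>
        rw [main m (fun i hi => ih i (by omega)), ← hrec m]
end

section
/- In the ring of formal power series in q and t over the symmetric functions, the elementary symmetric generating series factors as E(t) = ∑_{n≥0} e_n t^n = ∏_{k=0}^{∞} (1 + (1-q) ∑_{n≥1} [p_n]_q (-q^k t)^n)^{-1}, and dually H(t) = ∑_{n≥0} h_n t^n = ∏_{k=0}^{∞} (1 + (1-q) ∑_{n≥1} [p_n]_q (q^k t)^n), where the infinite products converge formally. -/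
open PowerSeries in
private lemma stab_aux {K : Type*} [CommRing K] {A B : PowerSeries (PowerSeries K)}
    (hA : (coeff (R := PowerSeries K) 0) A = 1) {i j M : ℕ} (hM : i < M) :
    (coeff (R := K) i) ((coeff (R := PowerSeries K) j)
        (rescale ((X : PowerSeries K) ^ M) A * B))
      = (coeff (R := K) i) ((coeff (R := PowerSeries K) j) B) := by
  rw [coeff_mul, map_sum, Finset.sum_eq_single ((0 : ℕ), j)]
  · simp [hA]
  · rintro ⟨b1, b2⟩ hb hne
    simp only [Prod.fst, Prod.snd] at hb ⊢
    rw [Finset.HasAntidiagonal.mem_antidiagonal] at hb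
    have hb1 : b1 ≠ 0 := by
      intro h0
      apply hne
      have : b2 = j := by omega
      simp [h0, this]
    rw [coeff_rescale, ← pow_mul, mul_assoc, coeff_X_pow_mul', if_neg]
    have : M ≤ M * b1 := Nat.le_mul_of_pos_right M (Nat.pos_of_ne_zero hb1)
    omega
  · intro hmem
    exact absurd (Finset.HasAntidiagonal.mem_antidiagonal.mpr (by simp)) hmem

open PowerSeries in
/-- Corollaries 8.3 and 8.6: in `B[[q,t]]` (realized as `PowerSeries (PowerSeries K)`:
outer variable `t`, inner variable `q = X`), with `E(t) = ∑ eₙ tⁿ` (the `eₙ` q-free),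
the q-power sums `[pₙ] ∈ K[[q]]` defined by `D_q E/E = ∑ [pₙ](-t)^{n-1}`, and
`H(t) = E(-t)⁻¹`, the infinite products
`E(t) = ∏_{k≥0} (1 + (1-q) ∑_{n≥1} [pₙ](-qᵏt)ⁿ)⁻¹` and
`H(t) = ∏_{k≥0} (1 + (1-q) ∑_{n≥1} [pₙ](qᵏt)ⁿ)` hold, where convergence of the
partial products is formal convergence: every coefficient of `qⁱtʲ` eventually
stabilizes to the corresponding coefficient of `E` (resp. `H`). -/
theorem stmt19 {K : Type*} [CommRing K] (e : ℕ → K) (h p : ℕ → PowerSeries K)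
    (he0 : e 0 = 1)
    (hdefp : qDeriv (PowerSeries.X : PowerSeries K)
        (PowerSeries.mk fun n => PowerSeries.C (R := K) (e n)) =
      PowerSeries.mk (fun n => PowerSeries.C (R := K) (e n)) *
        PowerSeries.mk (fun n => (-1 : PowerSeries K) ^ n * p (n + 1)))
    (hH : PowerSeries.rescale (-1 : PowerSeries K)
        (PowerSeries.mk fun n => PowerSeries.C (R := K) (e n)) * PowerSeries.mk h = 1) :
    (∀ i j : ℕ, ∃ N : ℕ, ∀ M ≥ N,
      PowerSeries.coeff (R := K) i (PowerSeries.coeff (R := PowerSeries K) j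
        (∏ k ∈ Finset.range M, PowerSeries.invOfUnit
          (PowerSeries.mk fun n => if n = 0 then (1 : PowerSeries K)
            else (1 - PowerSeries.X) * ((-1) ^ n * PowerSeries.X ^ (k * n) * p n)) 1))
      = PowerSeries.coeff (R := K) i (PowerSeries.coeff (R := PowerSeries K) j
          (PowerSeries.mk fun n => PowerSeries.C (R := K) (e n)))) ∧
    (∀ i j : ℕ, ∃ N : ℕ, ∀ M ≥ N,
      PowerSeries.coeff (R := K) i (PowerSeries.coeff (R := PowerSeries K) j
        (∏ k ∈ Finset.range M,
          PowerSeries.mk fun n => if n = 0 then (1 : PowerSeries K)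
            else (1 - PowerSeries.X) * (PowerSeries.X ^ (k * n) * p n)))
      = PowerSeries.coeff (R := K) i (PowerSeries.coeff (R := PowerSeries K) j
          (PowerSeries.mk h))) := by
  classical
  set E : PowerSeries (PowerSeries K) := PowerSeries.mk fun n => PowerSeries.C (R := K) (e n) with hEdef
  set P : PowerSeries (PowerSeries K) :=
    PowerSeries.mk fun n => (-1 : PowerSeries K) ^ n * p (n + 1) with hPdef
  set F : PowerSeries (PowerSeries K) := PowerSeries.mk fun n =>
    if n = 0 then (1 : PowerSeries K) else (1 - X) * ((-1) ^ n * p n) with hFdef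
  have h1 : rescale (X : PowerSeries K) E
      = E + (C (R := PowerSeries K) ((X : PowerSeries K) - 1)) *
          (X : PowerSeries (PowerSeries K)) * qDeriv X E := by
    ext n : 1
    rcases n with _ | n
    · simp [hEdef, mul_assoc, coeff_zero_eq_constantCoeff, map_mul]
    · rw [coeff_rescale, map_add, mul_assoc, coeff_C_mul, coeff_succ_X_mul, hEdef, coeff_mk,
        qDeriv, coeff_mk, coeff_mk]
      have hg : ((X : PowerSeries K) - 1) * qInt X (n + 1) = X ^ (n + 1) - 1 := by
        rw [qInt, mul_comm]; exact geom_sum_mul X (n + 1)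
      linear_combination (-(PowerSeries.C (R := K) (e (n + 1)))) * hg
  have h2 : F = 1 + (C (R := PowerSeries K) ((X : PowerSeries K) - 1)) *
      (X : PowerSeries (PowerSeries K)) * P := by
    ext n : 1
    rcases n with _ | n
    · simp [hFdef, hPdef, mul_assoc, coeff_zero_eq_constantCoeff, map_mul]
    · rw [hFdef, coeff_mk, if_neg (Nat.succ_ne_zero n), map_add, mul_assoc, coeff_C_mul,
        coeff_succ_X_mul, hPdef, coeff_mk, coeff_one, if_neg (Nat.succ_ne_zero n)]
      ring
  have hEF : rescale (X : PowerSeries K) E = E * F := by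
    rw [h1, hdefp, h2]; ring
  have hF0 : constantCoeff (R := PowerSeries K) F = 1 := by
    rw [hFdef, constantCoeff_mk, if_pos rfl]
  have hprodE : ∀ M : ℕ, E * ∏ k ∈ Finset.range M, rescale ((X : PowerSeries K) ^ k) F
      = rescale ((X : PowerSeries K) ^ M) E := by
    intro M
    induction M with
    | zero => simp [rescale_one]
    | succ M ih =>
      rw [Finset.prod_range_succ, ← mul_assoc, ih, ← map_mul, ← hEF, rescale_rescale]
      congr 1
      ring_nf
  have hFk0 : ∀ k : ℕ, constantCoeff (R := PowerSeries K)
      (rescale ((X : PowerSeries K) ^ k) F) = 1 := by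
    intro k
    rw [← coeff_zero_eq_constantCoeff_apply, coeff_rescale, pow_zero, one_mul,
      coeff_zero_eq_constantCoeff_apply, hF0]
  have hcancel : ∀ M : ℕ, rescale ((X : PowerSeries K) ^ M) E *
      ∏ k ∈ Finset.range M, invOfUnit (rescale ((X : PowerSeries K) ^ k) F) 1 = E := by
    intro M
    rw [← hprodE M, mul_assoc, ← Finset.prod_mul_distrib]
    rw [Finset.prod_eq_one fun k _ => mul_invOfUnit _ 1 (by rw [hFk0 k]; rfl), mul_one]
  have hE0 : (coeff (R := PowerSeries K) 0) E = 1 := by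
    rw [hEdef, coeff_mk, he0, map_one]
  -- H part
  set H : PowerSeries (PowerSeries K) := PowerSeries.mk h with hHdef
  set E' : PowerSeries (PowerSeries K) := rescale (-1 : PowerSeries K) E with hE'def
  set G : PowerSeries (PowerSeries K) := PowerSeries.mk fun n =>
    if n = 0 then (1 : PowerSeries K) else (1 - X) * p n with hGdef
  have hG : rescale (-1 : PowerSeries K) F = G := by
    ext n : 1
    rcases n with _ | n
    · simp [hFdef, hGdef]
    · rw [coeff_rescale, hFdef, hGdef, coeff_mk, coeff_mk, if_neg (Nat.succ_ne_zero n),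
        if_neg (Nat.succ_ne_zero n)]
      have hsq : ((-1 : PowerSeries K)) ^ (n + 1) * (-1) ^ (n + 1) = 1 := by
        rw [← mul_pow]; simp
      linear_combination ((1 - (X : PowerSeries K)) * p (n + 1)) * hsq
  have hEG' : rescale (X : PowerSeries K) E' = E' * G := by
    rw [hE'def, rescale_rescale, mul_comm, ← rescale_rescale, hEF, map_mul, hG]
  have hGH : G * rescale (X : PowerSeries K) H = H := by
    have k1 : E' * (G * rescale (X : PowerSeries K) H) = 1 := by
      calc E' * (G * rescale (X : PowerSeries K) H)
          = (E' * G) * rescale (X : PowerSeries K) H := by ring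
        _ = rescale (X : PowerSeries K) E' * rescale (X : PowerSeries K) H := by rw [hEG']
        _ = rescale (X : PowerSeries K) (E' * H) := (map_mul _ _ _).symm
        _ = 1 := by rw [hH, map_one]
    calc G * rescale (X : PowerSeries K) H
        = (E' * H) * (G * rescale (X : PowerSeries K) H) := by rw [hH, one_mul]
      _ = H * (E' * (G * rescale (X : PowerSeries K) H)) := by ring
      _ = H := by rw [k1, mul_one]
  have hprodH : ∀ M : ℕ, (∏ k ∈ Finset.range M, rescale ((X : PowerSeries K) ^ k) G) *
      rescale ((X : PowerSeries K) ^ M) H = H := by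
    intro M
    induction M with
    | zero => simp [rescale_one]
    | succ M ih =>
      have hr : rescale ((X : PowerSeries K) ^ (M + 1)) H
          = rescale ((X : PowerSeries K) ^ M) (rescale (X : PowerSeries K) H) := by
        rw [rescale_rescale]; congr 1; ring_nf
      rw [Finset.prod_range_succ, hr, mul_assoc, ← map_mul, hGH, ih]
  have hH0 : (coeff (R := PowerSeries K) 0) H = 1 := by
    have hc := congrArg (constantCoeff (R := PowerSeries K)) hH
    rw [map_mul, map_one] at hc
    have hcE : constantCoeff (R := PowerSeries K) E' = 1 := by
      rw [hE'def, ← coeff_zero_eq_constantCoeff_apply, coeff_rescale, pow_zero, one_mul,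
        coeff_zero_eq_constantCoeff_apply, hEdef, constantCoeff_mk, he0, map_one]
    rw [hcE, one_mul] at hc
    rw [← coeff_zero_eq_constantCoeff_apply] at hc
    exact hc
  constructor
  · intro i j
    refine ⟨i + 1, fun M hM => ?_⟩
    have hfacF : ∀ k : ℕ, (PowerSeries.mk fun n => if n = 0 then (1 : PowerSeries K)
        else (1 - PowerSeries.X) * ((-1) ^ n * PowerSeries.X ^ (k * n) * p n))
        = rescale ((X : PowerSeries K) ^ k) F := by
      intro k
      ext n : 1
      rcases n with _ | n
      · simp [hFdef]
      · rw [coeff_mk, coeff_rescale, hFdef, coeff_mk, if_neg (Nat.succ_ne_zero n),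
          if_neg (Nat.succ_ne_zero n), ← pow_mul]
        ring
    rw [Finset.prod_congr rfl fun k _ => by rw [hfacF k]]
    conv_rhs => rw [← hcancel M]
    exact (stab_aux hE0 (by omega)).symm
  · intro i j
    refine ⟨i + 1, fun M hM => ?_⟩
    have hfacG : ∀ k : ℕ, (PowerSeries.mk fun n => if n = 0 then (1 : PowerSeries K)
        else (1 - PowerSeries.X) * (PowerSeries.X ^ (k * n) * p n))
        = rescale ((X : PowerSeries K) ^ k) G := by
      intro k
      ext n : 1
      rcases n with _ | n
      · simp [hGdef]
      · rw [coeff_mk, coeff_rescale, hGdef, coeff_mk, if_neg (Nat.succ_ne_zero n),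
          if_neg (Nat.succ_ne_zero n), ← pow_mul]
        ring
    rw [Finset.prod_congr rfl fun k _ => by rw [hfacG k]]
    conv_rhs => rw [← hprodH M, mul_comm]
    exact (stab_aux hH0 (by omega)).symm
end
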